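/- arXiv:1611.06261 — 2 statements merged into one kernel-verified Lean document; each statement's English description precedes it below -/
import Mathlib

section
/- Let (X, ℝ, α) be a one-parameter C*-dynamical system, let (e_λ)_{λ∈Λ} be an approximate identity of X, let δ > 0, and let f : ℝ → ℂ be integrable with f ≥ 0, ∫ f(t) dt = 1, and with f̂ supported in (−δ, δ). Then the elements d_λ = α_f(e_λ) = ∫ f(t)·α_t(e_λ) dt satisfy ‖d_λ‖ ≤ 1 and d_λ ∈ X^α((−δ, δ)) for every λ, and (d_λ)_{λ∈Λ} is again an approximate identity of X, i.e., ‖x d_λ − x‖ → 0 and ‖d_λ x − x‖ → 0 for every x ∈ X. -/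
open MeasureTheory Set Filter Topology Pointwise

noncomputable section

namespace PeligradMax

variable {X : Type*} [NonUnitalNormedRing X] [StarRing X] [CStarRing X]
  [NormedSpace ℂ X] [IsScalarTower ℂ X X] [SMulCommClass ℂ X X] [StarModule ℂ X]
  [CompleteSpace X] [PartialOrder X] [StarOrderedRing X]

/-- A one-parameter C*-dynamical system: a group of *-automorphisms of `X`
with norm-continuous orbit maps. -/
structure IsCStarDynSys (α : ℝ → X → X) : Prop where
  map_zero_time : ∀ x, α 0 x = x
  map_add_time : ∀ s t x, α (s + t) x = α s (α t x)
  map_add : ∀ t x y, α t (x + y) = α t x + α t y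
  map_smulc : ∀ (t : ℝ) (c : ℂ) (x : X), α t (c • x) = c • α t x
  map_mul : ∀ t x y, α t (x * y) = α t x * α t y
  map_star : ∀ t x, α t (star x) = star (α t x)
  continuous_orbit : ∀ x, Continuous fun t => α t x

/-- Closed linear span. -/
def ClosedSpan (S : Set X) : Set X := closure ((Submodule.span ℂ S : Submodule ℂ X) : Set X)

def MulSet2 (S T : Set X) : Set X := {z | ∃ s ∈ S, ∃ t ∈ T, z = s * t}

def MulSet3 (S T R : Set X) : Set X := {z | ∃ s ∈ S, ∃ t ∈ T, ∃ r ∈ R, z = s * t * r}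

/-- Fourier transform of an integrable function. -/
def fourierT (f : ℝ → ℂ) (γ : ℝ) : ℂ := ∫ t : ℝ, f t * Complex.exp (-(Complex.I * γ * t))

/-- `α_f(x) = ∫ f(t) α_t(x) dt`. -/
def smear (α : ℝ → X → X) (f : ℝ → ℂ) (x : X) : X := ∫ t : ℝ, f t • α t x

/-- Arveson spectrum of an element. -/
def elemSpec (α : ℝ → X → X) (x : X) : Set ℝ :=
  {γ | ∀ f : ℝ → ℂ, Integrable f → smear α f x = 0 → fourierT f γ = 0}

/-- Spectral subspace associated with a closed set `F ⊆ ℝ`. -/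
def specC (α : ℝ → X → X) (F : Set ℝ) : Set X := {x | elemSpec α x ⊆ F}

/-- Spectral subspace of the subset `S` associated with an open set `U ⊆ ℝ`. -/
def specO (α : ℝ → X → X) (S : Set X) (U : Set ℝ) : Set X :=
  ClosedSpan {y | ∃ x ∈ S, ∃ f : ℝ → ℂ, Integrable f ∧
    IsCompact (tsupport (fourierT f)) ∧ tsupport (fourierT f) ⊆ U ∧ y = smear α f x}

/-- The fixed point algebra `X^α`. -/
def fixedPts (α : ℝ → X → X) : Set X := {x | ∀ t, α t x = x}

/-- The Arveson spectrum of the action restricted to `S`. -/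
def actSpec (α : ℝ → X → X) (S : Set X) : Set ℝ :=
  {γ : ℝ | ∀ ε > (0 : ℝ), S ∩ specC α (Icc (γ - ε) (γ + ε)) ≠ ({0} : Set X)}

def Invariant (α : ℝ → X → X) (S : Set X) : Prop := ∀ t : ℝ, ∀ x ∈ S, α t x ∈ S

def IsSubalgebra (B : Set X) : Prop :=
  (0 : X) ∈ B ∧ (∀ x ∈ B, ∀ y ∈ B, x + y ∈ B) ∧
  (∀ c : ℂ, ∀ x ∈ B, c • x ∈ B) ∧ ∀ x ∈ B, ∀ y ∈ B, x * y ∈ B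

def IsStarSubalgebra (B : Set X) : Prop := IsSubalgebra B ∧ ∀ x ∈ B, star x ∈ B

/-- `B` is a hereditary C*-subalgebra of the subset `S`. -/
def IsHereditaryIn (S B : Set X) : Prop :=
  B ⊆ S ∧ IsClosed B ∧ IsStarSubalgebra B ∧
  ∀ x ∈ S, ∀ b ∈ B, 0 ≤ x → x ≤ b → x ∈ B

/-- `K` is a norm-closed two-sided ideal of the subset `S`. -/
def IsClosedTwoSidedIdealIn (S K : Set X) : Prop :=
  K ⊆ S ∧ IsClosed K ∧ (0 : X) ∈ K ∧ (∀ x ∈ K, ∀ y ∈ K, x + y ∈ K) ∧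
  (∀ c : ℂ, ∀ x ∈ K, c • x ∈ K) ∧ ∀ s ∈ S, ∀ k ∈ K, s * k ∈ K ∧ k * s ∈ K

/-- `S` is `α`-simple: no nontrivial norm-closed `α`-invariant two-sided ideals. -/
def AlphaSimple (α : ℝ → X → X) (S : Set X) : Prop :=
  ∀ K : Set X, IsClosedTwoSidedIdealIn S K → Invariant α K → K = ({0} : Set X) ∨ K = S

/-- The strong Arveson spectrum of the action restricted to `B`. -/
def strongSpec (α : ℝ → X → X) (B : Set X) : Set ℝ :=
  {γ : ℝ | ∀ ε > (0 : ℝ),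
    ClosedSpan (MulSet3 (star '' (B ∩ specC α (Icc (γ - ε) (γ + ε)))) B
      (B ∩ specC α (Icc (γ - ε) (γ + ε)))) = B}

/-- The strong Connes spectrum of the action restricted to `S`. -/
def ConnesSpec (α : ℝ → X → X) (S : Set X) : Set ℝ :=
  ⋂ B ∈ {B : Set X | IsHereditaryIn S B ∧ B ≠ ({0} : Set X) ∧ Invariant α B},
    strongSpec α B

def IsMaximalClosedSubalgebra (B : Set X) : Prop :=
  IsClosed B ∧ IsSubalgebra B ∧ B ≠ (univ : Set X) ∧
  ∀ W : Set X, IsClosed W → IsSubalgebra W → B ⊆ W → W = B ∨ W = univ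

/-- The spectral Condition 4.3. -/
def Condition43 (α : ℝ → X → X) : Prop :=
  (∃ γ₀ : ℝ, 0 < γ₀ ∧ actSpec α (univ : Set X) = ({-γ₀, 0, γ₀} : Set ℝ) ∧
    IsClosedTwoSidedIdealIn (fixedPts α)
      (ClosedSpan (MulSet2 (specC α ({γ₀} : Set ℝ)) (star '' specC α ({γ₀} : Set ℝ)))) ∧
    ∀ K : Set X,
      IsClosedTwoSidedIdealIn
        (ClosedSpan (MulSet2 (specC α ({γ₀} : Set ℝ)) (star '' specC α ({γ₀} : Set ℝ)))) K →
      K = ({0} : Set X) ∨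
        K = ClosedSpan (MulSet2 (specC α ({γ₀} : Set ℝ)) (star '' specC α ({γ₀} : Set ℝ)))) ∨
  (∃ Y : Set X, IsClosedTwoSidedIdealIn (univ : Set X) Y ∧ Invariant α Y ∧ AlphaSimple α Y ∧
    specO α Y (Ioi (0 : ℝ)) = specO α (univ : Set X) (Ioi (0 : ℝ)) ∧
    actSpec α Y = ConnesSpec α Y ∧
    closure (Y + specC α (Ici (0 : ℝ))) = (univ : Set X))

section AuxSmear

lemma IsCStarDynSys.map_zero' {α : ℝ → X → X} (hα : IsCStarDynSys α) (t : ℝ) :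
    α t 0 = 0 := by
  have h := hα.map_smulc t 0 0
  simpa using h

lemma IsCStarDynSys.norm_le {α : ℝ → X → X} (hα : IsCStarDynSys α) (t : ℝ) (x : X) :
    ‖α t x‖ ≤ ‖x‖ := by
  letI : NonUnitalCStarAlgebra X :=
    { toNonUnitalNormedRing := ‹_›, toStarRing := ‹_›, toCompleteSpace := ‹_›,
      toCStarRing := ‹_›, toNormedSpace := ‹_›, toIsScalarTower := ‹_›,
      toSMulCommClass := ‹_›, toStarModule := ‹_› }
  let φ : X →⋆ₙₐ[ℂ] X :=
    { toFun := α t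
      map_smul' := hα.map_smulc t
      map_zero' := hα.map_zero' t
      map_add' := hα.map_add t
      map_mul' := hα.map_mul t
      map_star' := hα.map_star t }
  exact NonUnitalStarAlgHom.norm_apply_le φ x

lemma IsCStarDynSys.map_sub' {α : ℝ → X → X} (hα : IsCStarDynSys α) (t : ℝ) (a b : X) :
    α t (a - b) = α t a - α t b := by
  have h1 : a - b = a + (-1 : ℂ) • b := by
    rw [neg_one_smul, sub_eq_add_neg]
  rw [h1, hα.map_add, hα.map_smulc, neg_one_smul, ← sub_eq_add_neg]

lemma IsCStarDynSys.cancel {α : ℝ → X → X} (hα : IsCStarDynSys α) (t : ℝ) (x : X) :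
    α t (α (-t) x) = x := by
  rw [← hα.map_add_time, add_neg_cancel, hα.map_zero_time]

lemma integrable_smul_orbit {α : ℝ → X → X} (hα : IsCStarDynSys α) {f : ℝ → ℂ}
    (hf : Integrable f) (x : X) : Integrable (fun t => f t • α t x) := by
  refine Integrable.mono' (hf.norm.mul_const ‖x‖)
    (hf.aestronglyMeasurable.smul (hα.continuous_orbit x).aestronglyMeasurable)
    (Filter.Eventually.of_forall fun t => ?_)
  rw [norm_smul]
  exact mul_le_mul_of_nonneg_left (hα.norm_le t x) (norm_nonneg _)

lemma integral_norm_f_eq_one {f : ℝ → ℂ} (hf_int : Integrable f)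
    (hf_nonneg : ∀ t : ℝ, ∃ r : ℝ, 0 ≤ r ∧ f t = (r : ℂ))
    (hf_one : (∫ t : ℝ, f t) = 1) : (∫ t : ℝ, ‖f t‖) = 1 := by
  have hfabs : ∀ t, f t = ((‖f t‖ : ℝ) : ℂ) := by
    intro t
    obtain ⟨r, hr, hrt⟩ := hf_nonneg t
    rw [hrt]
    norm_num [abs_of_nonneg hr]
  have h1 : (∫ t : ℝ, f t) = (((∫ t : ℝ, ‖f t‖) : ℝ) : ℂ) :=
    (integral_congr_ae (Filter.Eventually.of_forall hfabs)).trans integral_ofReal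
  rw [hf_one] at h1
  exact_mod_cast h1.symm

lemma uniform_approx {Λ : Type*} [Preorder Λ] [IsDirected Λ (· ≤ ·)] [Nonempty Λ]
    (e : Λ → X) (he_norm : ∀ l, ‖e l‖ ≤ 1)
    (m : X → X → X) (hm_sub : ∀ a b c : X, m (a - b) c = m a c - m b c)
    (hm_norm : ∀ a b : X, ‖m a b‖ ≤ ‖a‖ * ‖b‖)
    (hme : ∀ y : X, Tendsto (fun l => ‖m y (e l) - y‖) atTop (𝓝 0))
    {S : Set X} (hS : IsCompact S) {ε : ℝ} (hε : 0 < ε) :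
    ∀ᶠ l in atTop, ∀ y ∈ S, ‖m y (e l) - y‖ < ε := by
  have hε3 : 0 < ε / 3 := by positivity
  obtain ⟨t, _, hcover⟩ := hS.elim_nhds_subcover (fun y => Metric.ball y (ε / 3))
    (fun y _ => Metric.ball_mem_nhds _ hε3)
  have hev : ∀ᶠ l in atTop, ∀ z ∈ (t : Set X), ‖m z (e l) - z‖ < ε / 3 :=
    (t.finite_toSet.eventually_all).mpr fun z _ => (hme z).eventually (gt_mem_nhds hε3)
  filter_upwards [hev] with l hl y hy
  have := hcover hy
  simp only [mem_iUnion, Metric.mem_ball, exists_prop] at this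
  obtain ⟨z, hz, hyz⟩ := this
  have hyz' : ‖y - z‖ < ε / 3 := by rwa [← dist_eq_norm]
  have key : m y (e l) - y = m (y - z) (e l) + (m z (e l) - z) + (z - y) := by
    rw [hm_sub]; abel
  have h1 : ‖m (y - z) (e l)‖ < ε / 3 := by
    refine lt_of_le_of_lt ((hm_norm _ _).trans ?_) hyz'
    exact mul_le_of_le_one_right (norm_nonneg _) (he_norm l)
  have h2 : ‖m z (e l) - z‖ < ε / 3 := hl z hz
  have h3 : ‖z - y‖ < ε / 3 := by rwa [norm_sub_rev]
  calc ‖m y (e l) - y‖ ≤ ‖m (y - z) (e l)‖ + ‖m z (e l) - z‖ + ‖z - y‖ := by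
        rw [key]
        exact (norm_add_le _ _).trans (add_le_add (norm_add_le _ _) le_rfl)
    _ < ε / 3 + ε / 3 + ε / 3 := by linarith
    _ = ε := by ring

lemma main_tendsto {α : ℝ → X → X} (hα : IsCStarDynSys α)
    {Λ : Type*} [Preorder Λ] [IsDirected Λ (· ≤ ·)] [Nonempty Λ]
    (e : Λ → X) (he_norm : ∀ l, ‖e l‖ ≤ 1)
    (m : X → X → X) (hm_sub : ∀ a b c : X, m (a - b) c = m a c - m b c)
    (hm_norm : ∀ a b : X, ‖m a b‖ ≤ ‖a‖ * ‖b‖)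
    (hme : ∀ y : X, Tendsto (fun l => ‖m y (e l) - y‖) atTop (𝓝 0))
    {f : ℝ → ℂ} (hf_int : Integrable f)
    (hf_nonneg : ∀ t : ℝ, ∃ r : ℝ, 0 ≤ r ∧ f t = (r : ℂ))
    (hf_one : (∫ t : ℝ, f t) = 1)
    (x : X) (L : X →L[ℂ] X) (hL : ∀ (t : ℝ) (z : X), L (α t z) = α t (m (α (-t) x) z)) :
    Tendsto (fun l => ‖L (smear α f (e l)) - x‖) atTop (𝓝 0) := by
  have hf1 : (∫ t : ℝ, ‖f t‖) = 1 := integral_norm_f_eq_one hf_int hf_nonneg hf_one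
  have hint : ∀ l, Integrable (fun t => f t • α t (e l)) := fun l =>
    integrable_smul_orbit hα hf_int (e l)
  have hint2 : ∀ l, Integrable (fun t => f t • L (α t (e l))) := by
    intro l
    have h := L.integrable_comp (hint l)
    simpa only [_root_.map_smul] using h
  have hLsm : ∀ l, L (smear α f (e l)) = ∫ t, f t • L (α t (e l)) := by
    intro l
    rw [smear, ← L.integral_comp_comm (hint l)]
    simp only [_root_.map_smul]
  have hdiff : ∀ l, L (smear α f (e l)) - x = ∫ t, f t • (L (α t (e l)) - x) := by
    intro l
    have hx : x = ∫ t : ℝ, f t • x := by rw [integral_smul_const, hf_one, one_smul]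
    rw [hLsm l]
    nth_rewrite 1 [hx]
    rw [← integral_sub (hint2 l) (hf_int.smul_const x)]
    simp only [smul_sub]
  have hb1 : ∀ (t : ℝ) (l : Λ), ‖L (α t (e l)) - x‖ ≤ ‖m (α (-t) x) (e l) - α (-t) x‖ := by
    intro t l
    have h1 : L (α t (e l)) - x = α t (m (α (-t) x) (e l) - α (-t) x) := by
      rw [hα.map_sub', hL, hα.cancel]
    rw [h1]
    exact hα.norm_le _ _
  have hCb : ∀ (t : ℝ) (l : Λ), ‖L (α t (e l)) - x‖ ≤ 2 * ‖x‖ := by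
    intro t l
    refine (hb1 t l).trans ?_
    have h2 := hm_norm (α (-t) x) (e l)
    have h3 := hα.norm_le (-t) x
    have h4 := he_norm l
    have h5 := norm_sub_le (m (α (-t) x) (e l)) (α (-t) x)
    nlinarith [norm_nonneg (α (-t) x), norm_nonneg (e l)]
  have hgint : ∀ l, Integrable (fun t => ‖f t‖ * ‖L (α t (e l)) - x‖) := by
    intro l
    refine Integrable.mono' (hf_int.norm.mul_const (2 * ‖x‖))
      (hf_int.norm.aestronglyMeasurable.mul
        (((L.continuous.comp (hα.continuous_orbit (e l))).sub
          continuous_const).norm.aestronglyMeasurable))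
      (Filter.Eventually.of_forall fun t => ?_)
    rw [Real.norm_eq_abs, abs_of_nonneg (by positivity)]
    exact mul_le_mul_of_nonneg_left (hCb t l) (norm_nonneg _)
  have hstep : ∀ l, ‖L (smear α f (e l)) - x‖ ≤ ∫ t, ‖f t‖ * ‖L (α t (e l)) - x‖ := by
    intro l
    rw [hdiff l]
    refine (norm_integral_le_integral_norm _).trans (le_of_eq ?_)
    simp only [norm_smul]
  rw [Metric.tendsto_nhds]
  intro ε hε
  set C : ℝ := 2 * ‖x‖ with hCdef
  have hC0 : (0 : ℝ) ≤ C := by positivity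
  have hε' : 0 < ε / (2 * (C + 1)) := by positivity
  set ε' := ε / (2 * (C + 1)) with hε'def
  obtain ⟨T, hT⟩ : ∃ T : ℝ, ∫ t in (Icc (-T) T)ᶜ, ‖f t‖ < ε' := by
    have hmono : Monotone (fun n : ℕ => Icc (-(n : ℝ)) (n : ℝ)) := fun a b hab =>
      Icc_subset_Icc (neg_le_neg (Nat.cast_le.mpr hab)) (Nat.cast_le.mpr hab)
    have hunion : (⋃ n : ℕ, Icc (-(n : ℝ)) (n : ℝ)) = univ := by
      ext t
      simp only [mem_iUnion, mem_univ, iff_true, mem_Icc]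
      obtain ⟨n, hn⟩ := exists_nat_ge |t|
      exact ⟨n, (abs_le.mp hn).1, (abs_le.mp hn).2⟩
    have htend := tendsto_setIntegral_of_monotone (fun n : ℕ => measurableSet_Icc) hmono
      (by rw [hunion]; exact hf_int.norm.integrableOn)
    rw [hunion, Measure.restrict_univ] at htend
    have h2 : Tendsto (fun n : ℕ => ∫ t in (Icc (-(n : ℝ)) (n : ℝ))ᶜ, ‖f t‖) atTop (𝓝 0) := by
      have heq : ∀ n : ℕ, (∫ t in (Icc (-(n : ℝ)) (n : ℝ))ᶜ, ‖f t‖)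
          = (∫ t, ‖f t‖) - ∫ t in Icc (-(n : ℝ)) (n : ℝ), ‖f t‖ := by
        intro n
        rw [eq_sub_iff_add_eq, add_comm, integral_add_compl measurableSet_Icc hf_int.norm]
      simp_rw [heq]
      have h3 := htend.const_sub (∫ t, ‖f t‖)
      simpa using h3
    obtain ⟨n, hn⟩ := (h2.eventually (gt_mem_nhds hε')).exists
    exact ⟨n, hn⟩
  have hcomp : IsCompact ((fun t : ℝ => α (-t) x) '' Icc (-T) T) :=
    isCompact_Icc.image ((hα.continuous_orbit x).comp continuous_neg)
  have huni := uniform_approx e he_norm m hm_sub hm_norm hme hcomp hε'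
  filter_upwards [huni] with l hl
  rw [Real.dist_eq, sub_zero, abs_of_nonneg (norm_nonneg _)]
  have hsplit : (∫ t, ‖f t‖ * ‖L (α t (e l)) - x‖)
      = (∫ t in Icc (-T) T, ‖f t‖ * ‖L (α t (e l)) - x‖)
      + ∫ t in (Icc (-T) T)ᶜ, ‖f t‖ * ‖L (α t (e l)) - x‖ :=
    (integral_add_compl measurableSet_Icc (hgint l)).symm
  have hA : (∫ t in Icc (-T) T, ‖f t‖ * ‖L (α t (e l)) - x‖) ≤ ε' := by
    have hA1 : (∫ t in Icc (-T) T, ‖f t‖ * ‖L (α t (e l)) - x‖)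
        ≤ ∫ t in Icc (-T) T, ‖f t‖ * ε' := by
      refine setIntegral_mono_on (hgint l).integrableOn
        (hf_int.norm.mul_const ε').integrableOn measurableSet_Icc (fun t ht => ?_)
      refine mul_le_mul_of_nonneg_left ?_ (norm_nonneg _)
      exact ((hb1 t l).trans_lt (hl _ (mem_image_of_mem _ ht))).le
    refine hA1.trans ?_
    rw [integral_mul_const]
    calc (∫ t in Icc (-T) T, ‖f t‖) * ε' ≤ 1 * ε' := by
          refine mul_le_mul_of_nonneg_right ?_ hε'.le
          rw [← hf1]
          exact setIntegral_le_integral hf_int.norm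
            (Filter.Eventually.of_forall fun t => norm_nonneg _)
      _ = ε' := one_mul _
  have hB : (∫ t in (Icc (-T) T)ᶜ, ‖f t‖ * ‖L (α t (e l)) - x‖) ≤ ε' * C := by
    have hB1 : (∫ t in (Icc (-T) T)ᶜ, ‖f t‖ * ‖L (α t (e l)) - x‖)
        ≤ ∫ t in (Icc (-T) T)ᶜ, ‖f t‖ * C := by
      refine setIntegral_mono_on (hgint l).integrableOn
        (hf_int.norm.mul_const C).integrableOn measurableSet_Icc.compl (fun t _ => ?_)
      exact mul_le_mul_of_nonneg_left (hCb t l) (norm_nonneg _)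
    refine hB1.trans ?_
    rw [integral_mul_const]
    exact mul_le_mul_of_nonneg_right hT.le hC0
  have hfinal : ε' + ε' * C < ε := by
    have hCne : (2 : ℝ) * (C + 1) ≠ 0 := by positivity
    have : ε' + ε' * C = ε / 2 := by
      rw [hε'def]
      field_simp
      ring
    rw [this]
    linarith
  calc ‖L (smear α f (e l)) - x‖ ≤ ∫ t, ‖f t‖ * ‖L (α t (e l)) - x‖ := hstep l
    _ ≤ ε' + ε' * C := by rw [hsplit]; exact add_le_add hA hB
    _ < ε := hfinal

end AuxSmear

/-- **Remark 4.2 v).** Smearing an approximate identity of `X` with a nonnegative integrable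
function `f` of integral one whose Fourier transform is supported in `(−δ, δ)` yields an
approximate identity of `X` consisting of elements of `X^α((−δ, δ))` of norm at most one. -/
theorem smeared_approximate_identity (α : ℝ → X → X) (hα : IsCStarDynSys α)
    {Λ : Type*} [Preorder Λ] [IsDirected Λ (· ≤ ·)] [Nonempty Λ]
    (e : Λ → X) (he_pos : ∀ l, 0 ≤ e l) (he_norm : ∀ l, ‖e l‖ ≤ 1)
    (he_right : ∀ x : X, Tendsto (fun l => ‖x * e l - x‖) atTop (𝓝 0))
    (he_left : ∀ x : X, Tendsto (fun l => ‖e l * x - x‖) atTop (𝓝 0))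
    (δ : ℝ) (hδ : 0 < δ)
    (f : ℝ → ℂ) (hf_int : Integrable f)
    (hf_nonneg : ∀ t : ℝ, ∃ r : ℝ, 0 ≤ r ∧ f t = (r : ℂ))
    (hf_one : (∫ t : ℝ, f t) = 1)
    (hf_supp : tsupport (fourierT f) ⊆ Ioo (-δ) δ) :
    (∀ l, ‖smear α f (e l)‖ ≤ 1 ∧
      smear α f (e l) ∈ specO α (univ : Set X) (Ioo (-δ) δ)) ∧
    (∀ x : X, Tendsto (fun l => ‖x * smear α f (e l) - x‖) atTop (𝓝 0)) ∧
    (∀ x : X, Tendsto (fun l => ‖smear α f (e l) * x - x‖) atTop (𝓝 0)) := by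
  have hf1 : (∫ t : ℝ, ‖f t‖) = 1 := integral_norm_f_eq_one hf_int hf_nonneg hf_one
  refine ⟨fun l => ⟨?_, ?_⟩, fun x => ?_, fun x => ?_⟩
  · calc ‖smear α f (e l)‖ ≤ ∫ t, ‖f t • α t (e l)‖ := norm_integral_le_integral_norm _
      _ ≤ ∫ t, ‖f t‖ := by
          refine integral_mono (integrable_smul_orbit hα hf_int (e l)).norm
            hf_int.norm (fun t => ?_)
          rw [norm_smul]
          exact mul_le_of_le_one_right (norm_nonneg _)
            ((hα.norm_le t (e l)).trans (he_norm l))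
      _ = 1 := hf1
  · have hcpt : IsCompact (tsupport (fourierT f)) :=
      isCompact_Icc.of_isClosed_subset (isClosed_tsupport _)
        (hf_supp.trans Ioo_subset_Icc_self)
    exact subset_closure (Submodule.subset_span
      ⟨e l, mem_univ _, f, hf_int, hcpt, hf_supp, rfl⟩)
  · have h := main_tendsto hα e he_norm (fun a b => a * b)
      (fun a b c => sub_mul a b c) (fun a b => norm_mul_le a b) he_right
      hf_int hf_nonneg hf_one x (ContinuousLinearMap.mul ℂ X x)
      (fun t z => by
        show x * α t z = α t (α (-t) x * z)
        rw [hα.map_mul, hα.cancel])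
    simpa using h
  · have h := main_tendsto hα e he_norm (fun a b => b * a)
      (fun a b c => mul_sub c a b)
      (fun a b => (norm_mul_le b a).trans_eq (mul_comm _ _)) he_left
      hf_int hf_nonneg hf_one x ((ContinuousLinearMap.mul ℂ X).flip x)
      (fun t z => by
        show α t z * x = α t (z * α (-t) x)
        rw [hα.map_mul, hα.cancel])
    simpa using h

end PeligradMax
end
end

section
/- Let (X, ℝ, α) be a periodic one-parameter C*-dynamical system with X_n ≠ {0} for some n ≠ 0, and suppose Condition (S) holds. Then either there exists an integer m > 0 such that {n ∈ ℤ : X_n ≠ {0}} = {−m, 0, m} and the closed linear span of {x y* : x, y ∈ X_m} is a two-sided ideal of X_0 having no norm-closed two-sided ideals other than {0} and itself, or there exists an integer m > 0 such that {n ∈ ℤ : X_n ≠ {0}} = mℤ. -/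
open MeasureTheory Set Filter Topology Pointwise

noncomputable section

namespace PeligradMax

variable {X : Type*} [NonUnitalNormedRing X] [StarRing X] [CStarRing X]
  [NormedSpace ℂ X] [IsScalarTower ℂ X X] [SMulCommClass ℂ X X] [StarModule ℂ X]
  [CompleteSpace X] [PartialOrder X] [StarOrderedRing X]

/-- The spectral subspace `X_n` of a periodic system with period `2π/γ₁`. -/
def specZ (α : ℝ → X → X) (γ₁ : ℝ) (n : ℤ) : Set X :=
  {x | ∀ t : ℝ, α t x = Complex.exp (Complex.I * (((n : ℝ) * γ₁ * t : ℝ) : ℂ)) • x}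

/-- Condition (S) for a periodic system. -/
def ConditionS (α : ℝ → X → X) (γ₁ : ℝ) : Prop :=
  ∃ J : Set X, IsClosedTwoSidedIdealIn (specZ α γ₁ 0) J ∧
    (∀ K : Set X, IsClosedTwoSidedIdealIn J K → K = ({0} : Set X) ∨ K = J) ∧
    ∀ n : ℤ, 0 < n → specZ α γ₁ n ≠ ({0} : Set X) →
      ClosedSpan {z : X | ∃ x ∈ specZ α γ₁ n, ∃ y ∈ specZ α γ₁ n, z = x * star y} = J

set_option linter.unusedSectionVars false
section Aux

variable {α : ℝ → X → X} {γ₁ : ℝ}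

lemma zero_mem_specZ (hα : IsCStarDynSys α) (n : ℤ) : (0 : X) ∈ specZ α γ₁ n := by
  intro t
  have h := hα.map_smulc t 0 0
  simp only [zero_smul] at h
  rw [h, smul_zero]

lemma specZ_ne_iff (hα : IsCStarDynSys α) (n : ℤ) :
    specZ α γ₁ n ≠ ({0} : Set X) ↔ ∃ x ∈ specZ α γ₁ n, x ≠ 0 := by
  constructor
  · intro h
    by_contra hc
    push_neg at hc
    exact h (Set.eq_singleton_iff_unique_mem.mpr
      ⟨zero_mem_specZ hα n, fun x hx => hc x hx⟩)
  · rintro ⟨x, hx, hx0⟩ h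
    rw [h] at hx
    exact hx0 hx

lemma specZ_mul_mem (hα : IsCStarDynSys α) {a b c : ℤ} (h : a + b = c) {x y : X}
    (hx : x ∈ specZ α γ₁ a) (hy : y ∈ specZ α γ₁ b) : x * y ∈ specZ α γ₁ c := by
  intro t
  rw [hα.map_mul t x y, hx t, hy t, smul_mul_assoc, mul_smul_comm, smul_smul,
    ← Complex.exp_add]
  congr 2
  push_cast
  rw [← h]
  push_cast
  ring

lemma specZ_star_mem (hα : IsCStarDynSys α) {a b : ℤ} (h : b = -a) {x : X}
    (hx : x ∈ specZ α γ₁ a) : star x ∈ specZ α γ₁ b := by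
  intro t
  rw [hα.map_star t x, hx t, star_smul]
  congr 1
  rw [Complex.star_def, ← Complex.exp_conj]
  congr 1
  simp only [map_mul, Complex.conj_I, Complex.conj_ofReal]
  push_cast
  rw [h]
  push_cast
  ring

lemma eq_zero_of_mul_star_self {x : X} (h : x * star x = 0) : x = 0 := by
  have h1 : ‖x‖ * ‖x‖ = 0 := by rw [← CStarRing.norm_self_mul_star, h, norm_zero]
  exact norm_eq_zero.mp (mul_self_eq_zero.mp h1)

lemma eq_zero_of_mul_star_self_mul {x : X} (h : x * star x * x = 0) : x = 0 := by
  have ha : (x * star x) * star (x * star x) = 0 := by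
    have hs : star (x * star x) = x * star x := by simp [star_mul, mul_assoc]
    rw [hs, mul_assoc (x * star x) x (star x) |>.symm, h, zero_mul]
  exact eq_zero_of_mul_star_self (eq_zero_of_mul_star_self ha)

lemma closedSpan_vanish_left {x : X} {Sg : Set X} (h : ∀ s ∈ Sg, x * s = 0) :
    ∀ j ∈ ClosedSpan Sg, x * j = 0 := by
  intro j hj
  have hcl : IsClosed {z : X | x * z = 0} :=
    isClosed_eq (continuous_const.mul continuous_id) continuous_const
  have hsp : ((Submodule.span ℂ Sg : Submodule ℂ X) : Set X) ⊆ {z : X | x * z = 0} := by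
    intro z hz
    induction hz using Submodule.span_induction with
    | mem s hs => exact h s hs
    | zero => exact mul_zero x
    | add a b _ _ ha hb => show x * (a + b) = 0; rw [mul_add, ha, hb, add_zero]
    | smul c a _ ha => show x * (c • a) = 0; rw [mul_smul_comm, ha, smul_zero]
  exact closure_minimal hsp hcl hj

lemma closedSpan_vanish_right {y : X} {Sg : Set X} (h : ∀ s ∈ Sg, s * y = 0) :
    ∀ j ∈ ClosedSpan Sg, j * y = 0 := by
  intro j hj
  have hcl : IsClosed {z : X | z * y = 0} :=
    isClosed_eq (continuous_id.mul continuous_const) continuous_const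
  have hsp : ((Submodule.span ℂ Sg : Submodule ℂ X) : Set X) ⊆ {z : X | z * y = 0} := by
    intro z hz
    induction hz using Submodule.span_induction with
    | mem s hs => exact h s hs
    | zero => exact zero_mul y
    | add a b _ _ ha hb => show (a + b) * y = 0; rw [add_mul, ha, hb, add_zero]
    | smul c a _ ha => show (c • a) * y = 0; rw [smul_mul_assoc, ha, smul_zero]
  exact closure_minimal hsp hcl hj

end Aux

/-- **Lemma 4.4.** For a nontrivial periodic one-parameter C*-dynamical system satisfying
Condition (S), either the set of `n` with `X_n ≠ {0}` equals `{−m, 0, m}` for some `m > 0`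
and the closed span of `X_m X_m*` is a simple ideal of `X_0`, or this set equals `mℤ` for
some `m > 0`. -/
theorem conditionS_spectrum_structure (α : ℝ → X → X) (hα : IsCStarDynSys α)
    (γ₁ : ℝ) (hγ₁ : 0 < γ₁) (hper : ∀ x : X, α (2 * Real.pi / γ₁) x = x)
    (hnontrivial : ∃ n : ℤ, n ≠ 0 ∧ specZ α γ₁ n ≠ ({0} : Set X))
    (hS : ConditionS α γ₁) :
    (∃ m : ℤ, 0 < m ∧ {n : ℤ | specZ α γ₁ n ≠ ({0} : Set X)} = ({-m, 0, m} : Set ℤ) ∧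
      IsClosedTwoSidedIdealIn (specZ α γ₁ 0)
        (ClosedSpan {z : X | ∃ x ∈ specZ α γ₁ m, ∃ y ∈ specZ α γ₁ m, z = x * star y}) ∧
      ∀ K : Set X,
        IsClosedTwoSidedIdealIn
          (ClosedSpan {z : X | ∃ x ∈ specZ α γ₁ m, ∃ y ∈ specZ α γ₁ m, z = x * star y}) K →
        K = ({0} : Set X) ∨
          K = ClosedSpan {z : X | ∃ x ∈ specZ α γ₁ m, ∃ y ∈ specZ α γ₁ m, z = x * star y}) ∨
    (∃ m : ℤ, 0 < m ∧ {n : ℤ | specZ α γ₁ n ≠ ({0} : Set X)} =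
      Set.range (fun k : ℤ => m * k)) := by
  classical
  obtain ⟨J, hJideal, hJsimple, hJspan⟩ := hS
  -- generator membership in J
  have hgen : ∀ n : ℤ, 0 < n → specZ α γ₁ n ≠ ({0} : Set X) →
      ∀ x ∈ specZ α γ₁ n, ∀ y ∈ specZ α γ₁ n, x * star y ∈ J := by
    intro n hn hne x hx y hy
    rw [← hJspan n hn hne]
    exact subset_closure (Submodule.subset_span ⟨x, hx, y, hy, rfl⟩)
  -- subtraction lemma
  have hsub : ∀ n k : ℤ, 0 < k → k < n → specZ α γ₁ n ≠ ({0} : Set X) →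
      specZ α γ₁ k ≠ ({0} : Set X) → specZ α γ₁ (n - k) ≠ ({0} : Set X) := by
    intro n k hk0 hkn hn hk
    by_contra h0'
    have h0 : specZ α γ₁ (n - k) = ({0} : Set X) := h0'
    obtain ⟨x, hx, hx0⟩ := (specZ_ne_iff hα n).mp hn
    have hJx : ∀ j ∈ J, j * x = 0 := by
      intro j hj
      rw [← hJspan k hk0 hk] at hj
      refine closedSpan_vanish_right ?_ j hj
      rintro s ⟨y, hy, y', hy', rfl⟩
      have h1 : star y' * x ∈ specZ α γ₁ (n - k) :=
        specZ_mul_mem hα (by ring) (specZ_star_mem hα rfl hy') hx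
      rw [h0, Set.mem_singleton_iff] at h1
      rw [mul_assoc, h1, mul_zero]
    exact hx0 (eq_zero_of_mul_star_self_mul
      (hJx (x * star x) (hgen n (hk0.trans hkn) hn x hx x hx)))
  -- the minimal positive element m'
  have hpos : ∃ k : ℕ, 0 < k ∧ specZ α γ₁ (k : ℤ) ≠ ({0} : Set X) := by
    obtain ⟨n₁, hn₁0, hn₁⟩ := hnontrivial
    rcases lt_or_gt_of_ne hn₁0 with h | h
    · refine ⟨(-n₁).toNat, by omega, ?_⟩
      have : ((-n₁).toNat : ℤ) = -n₁ := by omega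
      rw [this]
      obtain ⟨x, hx, hx0⟩ := (specZ_ne_iff hα n₁).mp hn₁
      exact (specZ_ne_iff hα (-n₁)).mpr ⟨star x, specZ_star_mem hα rfl hx,
        fun hc => hx0 (by simpa using congrArg star hc)⟩
    · refine ⟨n₁.toNat, by omega, ?_⟩
      have : (n₁.toNat : ℤ) = n₁ := by omega
      rw [this]; exact hn₁
  set m' : ℕ := Nat.find hpos with hm'def
  obtain ⟨hm'pos, hm'S⟩ := Nat.find_spec hpos
  set m : ℤ := (m' : ℤ) with hmdef
  have hm0 : 0 < m := by rw [hmdef]; exact_mod_cast hm'pos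
  have hminZ : ∀ k : ℤ, 0 < k → specZ α γ₁ k ≠ ({0} : Set X) → m ≤ k := by
    intro k hk0 hk
    have : m' ≤ k.toNat := Nat.find_min' hpos ⟨by omega, by rwa [show ((k.toNat : ℤ)) = k by omega]⟩
    omega
  -- symmetry
  have hsym : ∀ n : ℤ, specZ α γ₁ n ≠ ({0} : Set X) → specZ α γ₁ (-n) ≠ ({0} : Set X) := by
    intro n hn
    obtain ⟨x, hx, hx0⟩ := (specZ_ne_iff hα n).mp hn
    exact (specZ_ne_iff hα (-n)).mpr ⟨star x, specZ_star_mem hα rfl hx,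
      fun hc => hx0 (by simpa using congrArg star hc)⟩
  -- X_0 is nontrivial
  have h0S : specZ α γ₁ 0 ≠ ({0} : Set X) := by
    obtain ⟨x, hx, hx0⟩ := (specZ_ne_iff hα m).mp hm'S
    refine (specZ_ne_iff hα 0).mpr ⟨x * star x,
      specZ_mul_mem hα (by ring) hx (specZ_star_mem hα rfl hx), ?_⟩
    intro hc
    exact hx0 (eq_zero_of_mul_star_self hc)
  -- divisibility
  have hdvdN : ∀ n : ℕ, 0 < n → specZ α γ₁ (n : ℤ) ≠ ({0} : Set X) → m' ∣ n := by
    intro n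
    induction n using Nat.strong_induction_on with
    | _ n ih =>
      intro hn hnS
      have hle : m' ≤ n := by
        have := hminZ (n : ℤ) (by omega) hnS; omega
      rcases eq_or_lt_of_le hle with heq | hlt
      · exact heq ▸ dvd_refl m'
      · have hcast : ((n - m' : ℕ) : ℤ) = (n : ℤ) - m := by omega
        have hsub' : specZ α γ₁ ((n - m' : ℕ) : ℤ) ≠ ({0} : Set X) := by
          rw [hcast]
          exact hsub (n : ℤ) m hm0 (by omega) hnS hm'S
        have hd := ih (n - m') (by omega) (by omega) hsub'
        have : n = (n - m') + m' := by omega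
        rw [this]
        exact Nat.dvd_add hd (dvd_refl m')
  have hdvd : ∀ n : ℤ, 0 < n → specZ α γ₁ n ≠ ({0} : Set X) → m ∣ n := by
    intro n hn hnS
    have h2 : (m : ℤ) ∣ ((n.toNat : ℕ) : ℤ) := by
      rw [hmdef]
      exact_mod_cast hdvdN n.toNat (by omega)
        (by rwa [show ((n.toNat : ℤ)) = n by omega])
    rwa [show ((n.toNat : ℤ)) = n by omega] at h2
  by_cases hbig : ∃ n : ℤ, m < n ∧ specZ α γ₁ n ≠ ({0} : Set X)
  · -- mℤ case
    obtain ⟨n₀, hn₀m, hn₀S⟩ := hbig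
    -- downward chain to 2m
    have hdown : ∀ k : ℕ, 2 ≤ k → specZ α γ₁ (m * (k : ℤ)) ≠ ({0} : Set X) →
        specZ α γ₁ (m * 2) ≠ ({0} : Set X) := by
      intro k
      induction k using Nat.strong_induction_on with
      | _ k ih =>
        intro hk2 hkS
        rcases eq_or_lt_of_le hk2 with heq | hlt
        · rwa [show ((k : ℤ)) = 2 by omega] at hkS
        · have hstep : specZ α γ₁ (m * (k : ℤ) - m) ≠ ({0} : Set X) :=
            hsub (m * (k : ℤ)) m hm0 (by nlinarith [hm0]) hkS hm'S
          have hcast : m * (k : ℤ) - m = m * ((k - 1 : ℕ) : ℤ) := by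
            have : ((k - 1 : ℕ) : ℤ) = (k : ℤ) - 1 := by omega
            rw [this]; ring
          rw [hcast] at hstep
          exact ih (k - 1) (by omega) (by omega) hstep
    have h2m : specZ α γ₁ (m * 2) ≠ ({0} : Set X) := by
      obtain ⟨k₀, hk₀⟩ := hdvd n₀ (hm0.trans hn₀m) hn₀S
      have hk₀2 : 2 ≤ k₀ := by nlinarith [hm0, hn₀m, hk₀]
      refine hdown k₀.toNat (by omega) ?_
      rw [show ((k₀.toNat : ℤ)) = k₀ by omega, ← hk₀]
      exact hn₀S
    -- upward: all positive multiples of m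
    have hup : ∀ q : ℕ, 1 ≤ q → specZ α γ₁ (m * (q : ℤ)) ≠ ({0} : Set X) := by
      intro q
      induction q using Nat.strong_induction_on with
      | _ q ih =>
        intro hq1
        rcases eq_or_lt_of_le hq1 with h1 | hq2
        · rw [show ((q : ℤ)) = 1 by omega]; simpa using hm'S
        rcases eq_or_lt_of_le (show 2 ≤ q from hq2) with h2 | hq3
        · rw [show ((q : ℤ)) = 2 by omega]; exact h2m
        -- q ≥ 3 : the addition argument
        by_contra hq0'
        have hq0 : specZ α γ₁ (m * (q : ℤ)) = ({0} : Set X) := hq0'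
        have hq1S : specZ α γ₁ (m * ((q - 1 : ℕ) : ℤ)) ≠ ({0} : Set X) :=
          ih (q - 1) (by omega) (by omega)
        have hq2S : specZ α γ₁ (m * ((q - 2 : ℕ) : ℤ)) ≠ ({0} : Set X) :=
          ih (q - 2) (by omega) (by omega)
        have hq1pos : (0 : ℤ) < m * ((q - 1 : ℕ) : ℤ) := by
          have : (1 : ℤ) ≤ ((q - 1 : ℕ) : ℤ) := by omega
          nlinarith [hm0]
        have hq2pos : (0 : ℤ) < m * ((q - 2 : ℕ) : ℤ) := by
          have : (1 : ℤ) ≤ ((q - 2 : ℕ) : ℤ) := by omega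
          nlinarith [hm0]
        -- (i) X_m * J = 0
        have hB1 : ∀ x ∈ specZ α γ₁ m, ∀ j ∈ J, x * j = 0 := by
          intro x hx j hj
          rw [← hJspan (m * ((q - 1 : ℕ) : ℤ)) hq1pos hq1S] at hj
          refine closedSpan_vanish_left ?_ j hj
          rintro s ⟨u, hu, v, hv, rfl⟩
          have h1 : x * u ∈ specZ α γ₁ (m * (q : ℤ)) :=
            specZ_mul_mem hα (by push_cast [show ((q - 1 : ℕ) : ℤ) = (q : ℤ) - 1 from by omega]; ring) hx hu
          rw [hq0, Set.mem_singleton_iff] at h1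
          rw [← mul_assoc, h1, zero_mul]
        -- (ii) X_m * X_{m(q-2)} = 0
        have hC : ∀ x ∈ specZ α γ₁ m, ∀ y ∈ specZ α γ₁ (m * ((q - 2 : ℕ) : ℤ)), x * y = 0 := by
          intro x hx y hy
          have hj : y * star y ∈ J := hgen _ hq2pos hq2S y hy y hy
          have h1 : x * (y * star y) = 0 := hB1 x hx _ hj
          have h2 : (x * y) * star (x * y) = 0 := by
            rw [star_mul, show x * y * (star y * star x) = (x * (y * star y)) * star x from by
              simp [mul_assoc], h1, zero_mul]
          exact eq_zero_of_mul_star_self h2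
        -- (iii) J * X_{m(q-1)} = 0
        have hD : ∀ j ∈ J, ∀ y ∈ specZ α γ₁ (m * ((q - 1 : ℕ) : ℤ)), j * y = 0 := by
          intro j hj y hy
          rw [← hJspan m hm0 hm'S] at hj
          refine closedSpan_vanish_right ?_ j hj
          rintro s ⟨u, hu, v, hv, rfl⟩
          have h1 : star v * y ∈ specZ α γ₁ (m * ((q - 2 : ℕ) : ℤ)) := by
            refine specZ_mul_mem hα ?_ (specZ_star_mem hα rfl hv) hy
            push_cast [show ((q - 1 : ℕ) : ℤ) = (q : ℤ) - 1 from by omega,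
              show ((q - 2 : ℕ) : ℤ) = (q : ℤ) - 2 from by omega]
            ring
          rw [mul_assoc]; exact hC u hu _ h1
        -- contradiction
        obtain ⟨y, hy, hy0⟩ := (specZ_ne_iff hα _).mp hq1S
        exact hy0 (eq_zero_of_mul_star_self_mul
          (hD (y * star y) (hgen _ hq1pos hq1S y hy y hy) y hy))
    refine Or.inr ⟨m, hm0, ?_⟩
    ext n
    simp only [Set.mem_setOf_eq, Set.mem_range]
    constructor
    · intro hn
      rcases lt_trichotomy n 0 with h | h | h
      · obtain ⟨c, hc⟩ := hdvd (-n) (by omega) (hsym n hn)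
        exact ⟨-c, by rw [mul_neg, ← hc, neg_neg]⟩
      · exact ⟨0, by rw [mul_zero, h]⟩
      · obtain ⟨c, hc⟩ := hdvd n h hn
        exact ⟨c, hc.symm⟩
    · rintro ⟨k, rfl⟩
      rcases lt_trichotomy k 0 with h | h | h
      · have h1 : specZ α γ₁ (m * ((-k).toNat : ℤ)) ≠ ({0} : Set X) :=
          hup (-k).toNat (by omega)
        have h2 := hsym _ h1
        rwa [show -(m * ((-k).toNat : ℤ)) = m * k from by
          rw [show (((-k).toNat : ℤ)) = -k by omega]; ring] at h2
      · rw [h, mul_zero]; exact h0S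
      · have h1 : specZ α γ₁ (m * (k.toNat : ℤ)) ≠ ({0} : Set X) :=
          hup k.toNat (by omega)
        rwa [show ((k.toNat : ℤ)) = k by omega] at h1
  · -- {-m, 0, m} case
    push_neg at hbig
    refine Or.inl ⟨m, hm0, ?_, ?_, ?_⟩
    · ext n
      simp only [Set.mem_setOf_eq, Set.mem_insert_iff, Set.mem_singleton_iff]
      constructor
      · intro hn
        rcases lt_trichotomy n 0 with h | h | h
        · have h1 := hminZ (-n) (by omega) (hsym n hn)
          have h2 : ¬ (m < -n) := fun hlt => (hsym n hn) (hbig (-n) hlt)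
          left; omega
        · right; left; exact h
        · have h1 := hminZ n h hn
          have h2 : ¬ (m < n) := fun hlt => hn (hbig n hlt)
          right; right; omega
      · rintro (rfl | rfl | rfl)
        · exact hsym m hm'S
        · exact h0S
        · exact hm'S
    · rw [hJspan m hm0 hm'S]; exact hJideal
    · rw [hJspan m hm0 hm'S]; exact hJsimple


end PeligradMax
end
end
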